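/- If R and R₁ are n×p real matrices with R (RᵀR)⁻ Rᵀ = R₁ (R₁ᵀR₁)⁻ R₁ᵀ (Moore–Penrose pseudoinverses), then there exists a nonsingular p×p matrix A such that R₁ = R Aᵀ. -/

import Mathlib

open Matrix

/-- The four Penrose conditions characterizing the Moore–Penrose pseudoinverse. -/
def IsMoorePenrose {m n : Type*} [Fintype m] [Fintype n]
    (A : Matrix m n ℝ) (Ap : Matrix n m ℝ) : Prop :=
  A * Ap * A = A ∧ Ap * A * Ap = Ap ∧ (A * Ap)ᵀ = A * Ap ∧ (Ap * A)ᵀ = Ap * A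

/-- Auxiliary: real matrices satisfy `Dᵀ * D = 0 → D = 0`. -/
lemma aux_transpose_mul_self_eq_zero {m n : Type*} [Fintype m] [Fintype n]
    {D : Matrix m n ℝ} (h : Dᵀ * D = 0) : D = 0 := by
  have hct : Dᴴ = Dᵀ := by
    ext i j
    simp [Matrix.conjTranspose_apply]
  exact Matrix.conjTranspose_mul_self_eq_zero.mp (by rw [hct]; exact h)

/-- Auxiliary: `R * G * (Rᵀ * R) = R` when `G` satisfies the first Penrose condition
for `Rᵀ * R`. -/
lemma aux_mul_pinv {n p : Type*} [Fintype n] [Fintype p]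
    (R : Matrix n p ℝ) (G : Matrix p p ℝ)
    (h1 : (Rᵀ * R) * G * (Rᵀ * R) = Rᵀ * R) :
    R * (G * (Rᵀ * R)) = R := by
  have h1' : Rᵀ * (R * (G * (Rᵀ * R))) = Rᵀ * R := by
    simpa [Matrix.mul_assoc] using h1
  have key : (R * (G * (Rᵀ * R)) - R)ᵀ * (R * (G * (Rᵀ * R)) - R) = 0 := by
    simp only [Matrix.transpose_sub, Matrix.transpose_mul, Matrix.transpose_transpose,
      Matrix.sub_mul, Matrix.mul_sub, Matrix.mul_assoc]
    simp only [← Matrix.mul_assoc]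
    simp only [Matrix.mul_assoc]
    rw [show Gᵀ * (Rᵀ * (R * (G * (Rᵀ * R)))) = Gᵀ * (Rᵀ * R) by rw [h1'],
      show Rᵀ * (R * (G * (Rᵀ * R))) = Rᵀ * R from h1']
    abel
  have := aux_transpose_mul_self_eq_zero key
  linear_combination (norm := abel) this

/-- Auxiliary: if two linear maps out of a finite-dimensional space have the same range,
they differ by an automorphism of the source. -/
lemma aux_exists_equiv_of_range_eq {V W : Type*} [AddCommGroup V] [Module ℝ V]
    [AddCommGroup W] [Module ℝ W] [FiniteDimensional ℝ V]
    (f g : V →ₗ[ℝ] W) (h : LinearMap.range f = LinearMap.range g) :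
    ∃ e : V ≃ₗ[ℝ] V, f = g ∘ₗ (e : V →ₗ[ℝ] V) := by
  obtain ⟨Cf, hCf⟩ := Submodule.exists_isCompl (LinearMap.ker f)
  obtain ⟨Cg, hCg⟩ := Submodule.exists_isCompl (LinearMap.ker g)
  have hdim : Module.finrank ℝ (LinearMap.ker f) = Module.finrank ℝ (LinearMap.ker g) := by
    have h1 := LinearMap.finrank_range_add_finrank_ker f
    have h2 := LinearMap.finrank_range_add_finrank_ker g
    rw [h] at h1
    omega
  let kE : (LinearMap.ker f) ≃ₗ[ℝ] (LinearMap.ker g) := LinearEquiv.ofFinrankEq _ _ hdim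
  let cE : Cf ≃ₗ[ℝ] Cg :=
    ((((Submodule.quotientEquivOfIsCompl _ Cf hCf).symm.trans f.quotKerEquivRange).trans
      (LinearEquiv.ofEq _ _ h)).trans g.quotKerEquivRange.symm).trans
      (Submodule.quotientEquivOfIsCompl _ Cg hCg)
  have hcE : ∀ c : Cf, g (cE c) = f c := by
    intro c
    have hc : cE c = Submodule.quotientEquivOfIsCompl _ Cg hCg
        (g.quotKerEquivRange.symm (LinearEquiv.ofEq _ _ h
          (f.quotKerEquivRange (Submodule.Quotient.mk (c : V))))) := by
      simp [cE, LinearEquiv.trans_apply, Submodule.quotientEquivOfIsCompl_symm_apply]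
    have hmk : (Submodule.Quotient.mk ((cE c : Cg) : V) : V ⧸ LinearMap.ker g)
        = g.quotKerEquivRange.symm (LinearEquiv.ofEq _ _ h
          (f.quotKerEquivRange (Submodule.Quotient.mk (c : V)))) := by
      rw [hc]; exact Submodule.mk_quotientEquivOfIsCompl_apply hCg _
    have hval := congrArg (fun x => (g.quotKerEquivRange x : W)) hmk
    simpa [LinearMap.quotKerEquivRange_apply_mk, LinearEquiv.apply_symm_apply] using hval
  refine ⟨((Submodule.prodEquivOfIsCompl _ Cf hCf).symm.trans (kE.prodCongr cE)).trans
      (Submodule.prodEquivOfIsCompl _ Cg hCg), ?_⟩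
  ext v
  have hvmem : v ∈ (LinearMap.ker f) ⊔ Cf := by rw [hCf.sup_eq_top]; trivial
  obtain ⟨k, hk, c, hcm, hv⟩ := Submodule.mem_sup.mp hvmem
  have hsymm : (Submodule.prodEquivOfIsCompl _ Cf hCf).symm v = (⟨k, hk⟩, ⟨c, hcm⟩) := by
    rw [LinearEquiv.symm_apply_eq, Submodule.coe_prodEquivOfIsCompl']
    exact hv.symm
  have hgk : g ((kE ⟨k, hk⟩ : LinearMap.ker g) : V) = 0 := (kE ⟨k, hk⟩).2
  simp only [LinearMap.comp_apply, LinearEquiv.coe_coe, LinearEquiv.trans_apply, hsymm,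
    LinearEquiv.prodCongr_apply, Submodule.coe_prodEquivOfIsCompl', map_add, hgk, hcE, zero_add]
  rw [← hv, map_add, LinearMap.mem_ker.mp hk, zero_add]

/-- If `R (RᵀR)⁻ Rᵀ = R₁ (R₁ᵀR₁)⁻ R₁ᵀ` then `R₁ = R Aᵀ` for some nonsingular `A`. -/
theorem stmt1 {n p : ℕ} (R R₁ : Matrix (Fin n) (Fin p) ℝ)
    (G G₁ : Matrix (Fin p) (Fin p) ℝ)
    (hG : IsMoorePenrose (Rᵀ * R) G) (hG₁ : IsMoorePenrose (R₁ᵀ * R₁) G₁)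
    (heq : R * G * Rᵀ = R₁ * G₁ * R₁ᵀ) :
    ∃ A : Matrix (Fin p) (Fin p) ℝ, A.det ≠ 0 ∧ R₁ = R * Aᵀ := by
  have hR : R * (G * (Rᵀ * R)) = R := aux_mul_pinv R G hG.1
  have hR₁ : R₁ * (G₁ * (R₁ᵀ * R₁)) = R₁ := aux_mul_pinv R₁ G₁ hG₁.1
  -- R₁ is a right multiple of R and vice versa
  have h1 : R₁ = R * (G * (Rᵀ * R₁)) := by
    calc R₁ = R₁ * G₁ * R₁ᵀ * R₁ := by rw [Matrix.mul_assoc, Matrix.mul_assoc]; exact hR₁.symm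
    _ = R * G * Rᵀ * R₁ := by rw [heq]
    _ = R * (G * (Rᵀ * R₁)) := by rw [Matrix.mul_assoc, Matrix.mul_assoc]
  have h2 : R = R₁ * (G₁ * (R₁ᵀ * R)) := by
    calc R = R * G * Rᵀ * R := by rw [Matrix.mul_assoc, Matrix.mul_assoc]; exact hR.symm
    _ = R₁ * G₁ * R₁ᵀ * R := by rw [heq]
    _ = R₁ * (G₁ * (R₁ᵀ * R)) := by rw [Matrix.mul_assoc, Matrix.mul_assoc]
  -- equal ranges
  have hrange : LinearMap.range (Matrix.toLin' R₁) = LinearMap.range (Matrix.toLin' R) := by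
    apply le_antisymm
    · conv_lhs => rw [h1]
      rw [Matrix.toLin'_mul]
      exact LinearMap.range_comp_le_range _ _
    · conv_lhs => rw [h2]
      rw [Matrix.toLin'_mul]
      exact LinearMap.range_comp_le_range _ _
  obtain ⟨e, he⟩ := aux_exists_equiv_of_range_eq (Matrix.toLin' R₁) (Matrix.toLin' R) hrange
  refine ⟨(LinearMap.toMatrix' (e : (Fin p → ℝ) →ₗ[ℝ] (Fin p → ℝ)))ᵀ, ?_, ?_⟩
  · rw [Matrix.det_transpose]
    have hmul : LinearMap.toMatrix' (e : (Fin p → ℝ) →ₗ[ℝ] (Fin p → ℝ)) *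
        LinearMap.toMatrix' (e.symm : (Fin p → ℝ) →ₗ[ℝ] (Fin p → ℝ)) = 1 := by
      rw [← LinearMap.toMatrix'_comp]
      have : (e : (Fin p → ℝ) →ₗ[ℝ] (Fin p → ℝ)) ∘ₗ
          (e.symm : (Fin p → ℝ) →ₗ[ℝ] (Fin p → ℝ)) = LinearMap.id := by
        ext x; simp
      rw [this, LinearMap.toMatrix'_id]
    have hdet := congrArg Matrix.det hmul
    rw [Matrix.det_mul, Matrix.det_one] at hdet
    exact left_ne_zero_of_mul_eq_one hdet
  · rw [Matrix.transpose_transpose]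
    apply Matrix.toLin'.injective
    rw [Matrix.toLin'_mul, Matrix.toLin'_toMatrix']
    exact he
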